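/- Let ξ_1,...,ξ_n be independent R^d-valued observations from the mixture model P(ξ_j ∈ A) = Σ_m p_j^{(m)} F^{(m)}(A), with component means μ^{(m)} = 0 for all m, component second moments satisfying E^{(m)}[ξ² |log|ξ||^{1+δ}] < ∞ for some δ > 0, and concentration Gram matrices with (1/n)Γ_{;n} → Γ_∞, det Γ_∞ > 0. Let ξ̄^{(k)} = Σ_j a_j^{(k)} ξ_j with minimax weights a = p Γ^{-1}. Then there exists C < ∞ such that P( |ξ̄^{(k)}| > C √(log log n / n) ) → 0 as n → ∞. -/

import Mathlib

open MeasureTheory ProbabilityTheory Matrix Filter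
open scoped BigOperators Topology ENNReal

lemma aux_sq_norm_le_sum_sq {d : ℕ} (v : Fin d → ℝ) : ‖v‖ ^ 2 ≤ ∑ i, v i ^ 2 := by
  rcases isEmpty_or_nonempty (Fin d) with h | h
  · simp [Subsingleton.elim v 0]
  · obtain ⟨i, -, hi⟩ := Finset.exists_mem_eq_sup' (Finset.univ_nonempty (α := Fin d))
      (fun i => ‖v i‖₊)
    have hnorm : ‖v‖ = |v i| := by
      rw [Pi.norm_def, ← Finset.sup'_eq_sup (Finset.univ_nonempty (α := Fin d)), hi]
      simp [Real.norm_eq_abs]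
    rw [hnorm, sq_abs]
    exact Finset.single_le_sum (fun j _ => sq_nonneg (v j)) (Finset.mem_univ i)

lemma aux_mixture_integrable {d M : ℕ} (F : Fin M → Measure (Fin d → ℝ)) (p : Fin M → ℝ)
    (g : (Fin d → ℝ) → ℝ) (hg : ∀ m, Integrable g (F m)) :
    Integrable g (∑ m, ENNReal.ofReal (p m) • F m) := by
  rw [integrable_finset_sum_measure]
  exact fun m _ => (hg m).smul_measure ENNReal.ofReal_ne_top

lemma aux_mixture_integral {d M : ℕ} (F : Fin M → Measure (Fin d → ℝ)) (p : Fin M → ℝ)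
    (hp : ∀ m, 0 ≤ p m) (g : (Fin d → ℝ) → ℝ) (hg : ∀ m, Integrable g (F m)) :
    ∫ x, g x ∂(∑ m, ENNReal.ofReal (p m) • F m) = ∑ m, p m * ∫ x, g x ∂(F m) := by
  rw [integral_finset_sum_measure (fun m _ => (hg m).smul_measure ENNReal.ofReal_ne_top)]
  refine Finset.sum_congr rfl fun m _ => ?_
  rw [integral_smul_measure, ENNReal.toReal_ofReal (hp m), smul_eq_mul]

/-- Lemma 2: LIL-type rate for the minimax-weighted sample mean in the
mixture with varying concentrations model with centered components. -/
theorem weighted_mean_LIL_rate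
    {Ω : Type*} [MeasurableSpace Ω] (P : Measure Ω) [IsProbabilityMeasure P]
    {d M : ℕ}
    (ξ : ℕ → Ω → (Fin d → ℝ)) (hmeas : ∀ j, Measurable (ξ j))
    (hindep : iIndepFun ξ P)
    (pc : ℕ → Fin M → ℝ)
    (hpc : ∀ j m, pc j m ∈ Set.Icc (0 : ℝ) 1) (hpc1 : ∀ j, ∑ m, pc j m = 1)
    (F : Fin M → Measure (Fin d → ℝ)) (hF : ∀ m, IsProbabilityMeasure (F m))
    (hlaw : ∀ j, Measure.map (ξ j) P = ∑ m, ENNReal.ofReal (pc j m) • F m)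
    (hcent : ∀ m, ∫ x, x ∂(F m) = 0)
    (δ : ℝ) (hδ : 0 < δ)
    (hlogmom : ∀ m, Integrable
      (fun x : Fin d → ℝ => ‖x‖ ^ 2 * abs (Real.log ‖x‖) ^ (1 + δ)) (F m))
    (Γ : ℕ → Matrix (Fin M) (Fin M) ℝ)
    (hΓ : ∀ n, Γ n = ∑ j ∈ Finset.range n, vecMulVec (pc j) (pc j))
    (Γinf : Matrix (Fin M) (Fin M) ℝ)
    (hlim : Tendsto (fun n : ℕ => ((n : ℝ)⁻¹) • Γ n) atTop (𝓝 Γinf))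
    (hdet : 0 < Γinf.det) (k : Fin M) :
    ∃ C : ℝ, Tendsto
      (fun n : ℕ => P {ω |
        C * Real.sqrt (Real.log (Real.log n) / n) <
          ‖∑ j ∈ Finset.range n, ((Γ n)⁻¹.mulVec (pc j)) k • ξ j ω‖})
      atTop (𝓝 0) := by
  haveI := hF
  -- ===== Step 1: weights are eventually O(1/n) =====
  have hweights : ∃ B : ℝ, 0 ≤ B ∧ ∀ᶠ n : ℕ in atTop, ∀ j : ℕ,
      |((Γ n)⁻¹.mulVec (pc j)) k| ≤ B / n := by
    set f : ℕ → Matrix (Fin M) (Fin M) ℝ := fun n => ((n : ℝ)⁻¹ • Γ n)⁻¹ with hf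
    have hcont : ContinuousAt Inv.inv Γinf := by
      refine continuousAt_matrix_inv _ ?_
      rw [Ring.inverse_eq_inv']
      exact continuousAt_inv₀ hdet.ne'
    have hinvlim : Tendsto f atTop (𝓝 Γinf⁻¹) := hcont.tendsto.comp hlim
    have hentry : ∀ m : Fin M, Tendsto (fun n => f n k m) atTop (𝓝 (Γinf⁻¹ k m)) := fun m =>
      ((Continuous.matrix_elem continuous_id k m).tendsto _).comp hinvlim
    have hBent : ∀ᶠ n : ℕ in atTop, ∀ m : Fin M, |f n k m| ≤ |Γinf⁻¹ k m| + 1 := by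
      rw [eventually_all]
      intro m
      have : Tendsto (fun n => |f n k m|) atTop (𝓝 |Γinf⁻¹ k m|) :=
        (continuous_abs.tendsto _).comp (hentry m)
      exact (this.eventually_lt_const (by linarith)).mono fun n hn => hn.le
    have hdetpos : ∀ᶠ n : ℕ in atTop, IsUnit (((n : ℝ)⁻¹ • Γ n).det) := by
      have : Tendsto (fun n : ℕ => ((n : ℝ)⁻¹ • Γ n).det) atTop (𝓝 Γinf.det) :=
        ((Continuous.matrix_det continuous_id).tendsto _).comp hlim
      exact (this.eventually_const_lt hdet).mono fun n hn => (isUnit_iff_ne_zero).2 hn.ne'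
    have hGninv : ∀ᶠ n : ℕ in atTop, (Γ n)⁻¹ = (n : ℝ)⁻¹ • f n := by
      filter_upwards [hdetpos, eventually_ge_atTop 1] with n hdn hn1
      have hn0 : ((n : ℝ)) ≠ 0 := Nat.cast_ne_zero.2 (by omega)
      have hΓeq : Γ n = (n : ℝ) • ((n : ℝ)⁻¹ • Γ n) := by
        rw [smul_smul, mul_inv_cancel₀ hn0, one_smul]
      show (Γ n)⁻¹ = (n : ℝ)⁻¹ • ((n : ℝ)⁻¹ • Γ n)⁻¹
      conv_lhs => rw [hΓeq]
      rw [show ((n : ℝ)) • ((n : ℝ)⁻¹ • Γ n) = (Units.mk0 ((n : ℝ)) hn0) • ((n : ℝ)⁻¹ • Γ n)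
        from rfl, Matrix.inv_smul' _ _ hdn]
      simp [Units.smul_def]
    refine ⟨∑ m, (|Γinf⁻¹ k m| + 1), Finset.sum_nonneg fun m _ => by positivity, ?_⟩
    filter_upwards [hGninv, hBent, eventually_ge_atTop 1] with n hGn hBn hn1 j
    have hn0 : (0 : ℝ) < n := by exact_mod_cast Nat.pos_of_ne_zero (by omega)
    rw [hGn, Matrix.smul_mulVec]
    simp only [Pi.smul_apply, smul_eq_mul, abs_mul, abs_inv, abs_of_pos hn0]
    rw [div_eq_inv_mul]
    refine mul_le_mul_of_nonneg_left ?_ (by positivity)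
    calc |(f n).mulVec (pc j) k| = |∑ m, f n k m * pc j m| := by
          simp [Matrix.mulVec, dotProduct]
      _ ≤ ∑ m, |f n k m * pc j m| := Finset.abs_sum_le_sum_abs _ _
      _ ≤ ∑ m, (|Γinf⁻¹ k m| + 1) := by
          refine Finset.sum_le_sum fun m _ => ?_
          rw [abs_mul]
          have h1 : |pc j m| ≤ 1 := abs_le.2 ⟨by linarith [(hpc j m).1], (hpc j m).2⟩
          calc |f n k m| * |pc j m| ≤ (|Γinf⁻¹ k m| + 1) * 1 :=
                mul_le_mul (hBn m) h1 (abs_nonneg _) (by positivity)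
            _ = _ := mul_one _
  obtain ⟨B, hB0, haB⟩ := hweights
  -- ===== Step 2: second moments on components =====
  have hsqF : ∀ m, Integrable (fun x : Fin d → ℝ => ‖x‖ ^ 2) (F m) := by
    intro m
    refine (((integrable_const (Real.exp 1 ^ 2)).add (hlogmom m)).mono'
      (continuous_norm.pow 2).aestronglyMeasurable (Filter.Eventually.of_forall fun x => ?_))
    rw [Real.norm_eq_abs, abs_of_nonneg (by positivity)]
    rcases le_or_gt ‖x‖ (Real.exp 1) with hx | hx
    · have h1 : (0:ℝ) ≤ ‖x‖ ^ 2 * |Real.log ‖x‖| ^ (1 + δ) := by positivity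
      simp only [Pi.add_apply]
      nlinarith [norm_nonneg x, Real.exp_pos 1]
    · have h1 : (1:ℝ) ≤ Real.log ‖x‖ := by
        rw [Real.le_log_iff_exp_le (lt_trans (Real.exp_pos 1) hx)]
        exact hx.le
      have h2 : (1:ℝ) ≤ |Real.log ‖x‖| ^ (1 + δ) :=
        Real.one_le_rpow (le_trans h1 (le_abs_self _)) (by linarith)
      simp only [Pi.add_apply]
      nlinarith [mul_le_mul_of_nonneg_left h2 (sq_nonneg ‖x‖), Real.exp_pos 1]
  have hptw : ∀ (i : Fin d) (x : Fin d → ℝ), x i ^ 2 ≤ ‖x‖ ^ 2 := by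
    intro i x
    have h := norm_le_pi_norm x i
    rw [Real.norm_eq_abs] at h
    nlinarith [abs_nonneg (x i), sq_abs (x i), norm_nonneg x]
  have hxiF : ∀ (m) (i : Fin d), Integrable (fun x : Fin d → ℝ => x i ^ 2) (F m) := by
    intro m i
    refine (hsqF m).mono' ((continuous_apply i).pow 2).aestronglyMeasurable
      (Filter.Eventually.of_forall fun x => ?_)
    rw [Real.norm_eq_abs, abs_of_nonneg (by positivity)]
    exact hptw i x
  have hidF : ∀ m, Integrable (fun x : Fin d → ℝ => x) (F m) := by
    intro m
    refine ((integrable_const (1:ℝ)).add (hsqF m)).mono'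
      measurable_id.aestronglyMeasurable (Filter.Eventually.of_forall fun x => ?_)
    simp only [Pi.add_apply]
    nlinarith [norm_nonneg x, sq_nonneg (‖x‖ - 1)]
  have hcenti : ∀ (m) (i : Fin d), ∫ x, x i ∂(F m) = 0 := by
    intro m i
    have := (ContinuousLinearMap.proj (R := ℝ) (φ := fun _ : Fin d => ℝ) i).integral_comp_comm
      (hidF m)
    simpa [hcent m] using this
  set σ2 : ℝ := ∑ m, ∫ x, ‖x‖ ^ 2 ∂(F m) with hσ2
  have hσ2nonneg : 0 ≤ σ2 :=
    Finset.sum_nonneg fun m _ => integral_nonneg fun x => sq_nonneg _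
  -- ===== Step 3: moments of the observations under P =====
  have hPsq : ∀ j (i : Fin d), Integrable (fun ω => ξ j ω i ^ 2) P := by
    intro j i
    have hg : Integrable (fun x : Fin d → ℝ => x i ^ 2) (Measure.map (ξ j) P) := by
      rw [hlaw j]; exact aux_mixture_integrable F (pc j) _ (fun m => hxiF m i)
    exact (integrable_map_measure ((continuous_apply i).pow 2).aestronglyMeasurable
      (hmeas j).aemeasurable).1 hg
  have hPsq_le : ∀ j (i : Fin d), ∫ ω, ξ j ω i ^ 2 ∂P ≤ σ2 := by
    intro j i
    have h1 : ∫ ω, ξ j ω i ^ 2 ∂P = ∫ x, x i ^ 2 ∂(Measure.map (ξ j) P) :=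
      (integral_map (hmeas j).aemeasurable
        ((continuous_apply i).pow 2).aestronglyMeasurable).symm
    rw [h1, hlaw j, aux_mixture_integral F (pc j) (fun m => (hpc j m).1) _ (fun m => hxiF m i)]
    refine Finset.sum_le_sum fun m _ => ?_
    have hn1 : 0 ≤ ∫ x, x i ^ 2 ∂F m := integral_nonneg fun x => sq_nonneg _
    have hle : ∫ x, x i ^ 2 ∂F m ≤ ∫ x, ‖x‖ ^ 2 ∂F m :=
      integral_mono (hxiF m i) (hsqF m) fun x => hptw i x
    calc pc j m * ∫ x, x i ^ 2 ∂F m ≤ 1 * ∫ x, ‖x‖ ^ 2 ∂F m := by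
          refine mul_le_mul (hpc j m).2 hle hn1 zero_le_one
      _ = _ := one_mul _
  have hPmean : ∀ j (i : Fin d), ∫ ω, ξ j ω i ∂P = 0 := by
    intro j i
    have hxi_int : ∀ m, Integrable (fun x : Fin d → ℝ => x i) (F m) := fun m =>
      (ContinuousLinearMap.proj (R := ℝ) (φ := fun _ : Fin d => ℝ) i).integrable_comp (hidF m)
    have h1 : ∫ ω, ξ j ω i ∂P = ∫ x, x i ∂(Measure.map (ξ j) P) :=
      (integral_map (hmeas j).aemeasurable (continuous_apply i).aestronglyMeasurable).symm
    rw [h1, hlaw j, aux_mixture_integral F (pc j) (fun m => (hpc j m).1) _ hxi_int]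
    simp [hcenti]
  have hmem : ∀ j (i : Fin d), MemLp (fun ω => ξ j ω i) 2 P := fun j i =>
    (memLp_two_iff_integrable_sq
      ((measurable_pi_apply i).comp (hmeas j)).aestronglyMeasurable).2 (hPsq j i)
  -- ===== Step 4: second moment of the weighted sum =====
  have moment : ∀ (n : ℕ) (c : ℝ), 0 ≤ c → (∀ j, |((Γ n)⁻¹.mulVec (pc j)) k| ≤ c) →
      Integrable (fun ω => ‖∑ j ∈ Finset.range n, ((Γ n)⁻¹.mulVec (pc j)) k • ξ j ω‖ ^ 2) P ∧
      ∫ ω, ‖∑ j ∈ Finset.range n, ((Γ n)⁻¹.mulVec (pc j)) k • ξ j ω‖ ^ 2 ∂P ≤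
        d * (n * c ^ 2 * σ2) := by
    intro n c hc ha
    set a : ℕ → ℝ := fun j => ((Γ n)⁻¹.mulVec (pc j)) k with haa
    set X : Fin d → ℕ → Ω → ℝ := fun i j ω => a j * ξ j ω i with hX
    have hXmem : ∀ (i : Fin d) (j : ℕ), MemLp (X i j) 2 P := fun i j => (hmem j i).const_mul _
    have hfun : ∀ i : Fin d, (fun ω => ∑ j ∈ Finset.range n, X i j ω)
        = ∑ j ∈ Finset.range n, X i j := fun i => by ext ω; simp
    have hXsum_mem : ∀ i : Fin d, MemLp (fun ω => ∑ j ∈ Finset.range n, X i j ω) 2 P :=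
      fun i => (hfun i) ▸ memLp_finset_sum' _ fun j _ => hXmem i j
    have hXint : ∀ (i : Fin d) (j : ℕ), Integrable (X i j) P :=
      fun i j => (hXmem i j).integrable one_le_two
    have hXmean : ∀ (i : Fin d) (j : ℕ), ∫ ω, X i j ω ∂P = 0 := by
      intro i j
      simp only [hX]
      rw [integral_const_mul, hPmean j i, mul_zero]
    have hXmeas : ∀ (i : Fin d) (j : ℕ), Measurable (X i j) := fun i j =>
      ((measurable_pi_apply i).comp (hmeas j)).const_mul _
    have hvar : ∀ i : Fin d, variance (∑ j ∈ Finset.range n, X i j) P =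
        ∑ j ∈ Finset.range n, variance (X i j) P := by
      intro i
      refine IndepFun.variance_sum (fun j _ => hXmem i j) ?_
      intro j hj l hl hjl
      exact (hindep.indepFun hjl).comp
        ((measurable_pi_apply i).const_mul (a j)) ((measurable_pi_apply i).const_mul (a l))
    have hvar_j : ∀ (i : Fin d) (j : ℕ), variance (X i j) P = a j ^ 2 * ∫ ω, ξ j ω i ^ 2 ∂P := by
      intro i j
      rw [variance_eq_sub (hXmem i j), hXmean i j]
      have : ∫ ω, (X i j ω) ^ 2 ∂P = a j ^ 2 * ∫ ω, ξ j ω i ^ 2 ∂P := by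
        simp only [hX, mul_pow]
        rw [integral_const_mul]
      simpa [Pi.pow_apply] using this
    have hEsq_i : ∀ i : Fin d,
        ∫ ω, (∑ j ∈ Finset.range n, X i j ω) ^ 2 ∂P ≤ n * c ^ 2 * σ2 := by
      intro i
      have h0 : ∫ ω, (∑ j ∈ Finset.range n, X i j ω) ∂P = 0 := by
        rw [integral_finset_sum _ fun j _ => hXint i j]
        simp [hXmean i]
      have hvd := variance_eq_sub (hXsum_mem i)
      have hEsq : ∫ ω, (∑ j ∈ Finset.range n, X i j ω) ^ 2 ∂P =
          variance (∑ j ∈ Finset.range n, X i j) P := by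
        rw [← hfun i, hvd, h0]
        simp
      rw [hEsq, hvar i]
      calc ∑ j ∈ Finset.range n, variance (X i j) P
          ≤ ∑ _j ∈ Finset.range n, c ^ 2 * σ2 := by
            refine Finset.sum_le_sum fun j _ => ?_
            rw [hvar_j i j]
            have h1 : a j ^ 2 ≤ c ^ 2 := by
              rw [← sq_abs (a j)]
              exact pow_le_pow_left₀ (abs_nonneg _) (ha j) 2
            have h2 : 0 ≤ ∫ ω, ξ j ω i ^ 2 ∂P := integral_nonneg fun ω => sq_nonneg _
            exact mul_le_mul h1 (hPsq_le j i) h2 (by positivity)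
        _ = n * c ^ 2 * σ2 := by
            rw [Finset.sum_const, Finset.card_range, nsmul_eq_mul]; ring
    have hSi : ∀ (ω : Ω) (i : Fin d),
        (∑ j ∈ Finset.range n, a j • ξ j ω) i = ∑ j ∈ Finset.range n, X i j ω := by
      intro ω i
      rw [Finset.sum_apply]
      simp [hX]
    have hSmeas : AEStronglyMeasurable
        (fun ω => ‖∑ j ∈ Finset.range n, a j • ξ j ω‖ ^ 2) P := by
      have hSm : Measurable (fun ω => ∑ j ∈ Finset.range n, a j • ξ j ω) :=
        Finset.measurable_sum _ fun j _ => (hmeas j).const_smul (a j)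
      exact (hSm.norm.pow_const 2).aestronglyMeasurable
    have hdom : ∀ ω, ‖∑ j ∈ Finset.range n, a j • ξ j ω‖ ^ 2 ≤
        ∑ i, (∑ j ∈ Finset.range n, X i j ω) ^ 2 := by
      intro ω
      have h := aux_sq_norm_le_sum_sq (∑ j ∈ Finset.range n, a j • ξ j ω)
      refine h.trans_eq (Finset.sum_congr rfl fun i _ => ?_)
      rw [hSi ω i]
    have hgint : Integrable (fun ω => ∑ i, (∑ j ∈ Finset.range n, X i j ω) ^ 2) P :=
      integrable_finset_sum _ fun i _ => (hXsum_mem i).integrable_sq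
    have hint : Integrable
        (fun ω => ‖∑ j ∈ Finset.range n, a j • ξ j ω‖ ^ 2) P := by
      refine hgint.mono' hSmeas (Filter.Eventually.of_forall fun ω => ?_)
      rw [Real.norm_eq_abs, abs_of_nonneg (sq_nonneg _)]
      exact hdom ω
    refine ⟨hint, ?_⟩
    calc ∫ ω, ‖∑ j ∈ Finset.range n, a j • ξ j ω‖ ^ 2 ∂P
        ≤ ∫ ω, ∑ i, (∑ j ∈ Finset.range n, X i j ω) ^ 2 ∂P :=
          integral_mono hint hgint hdom
      _ = ∑ i, ∫ ω, (∑ j ∈ Finset.range n, X i j ω) ^ 2 ∂P :=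
          integral_finset_sum _ fun i _ => (hXsum_mem i).integrable_sq
      _ ≤ ∑ _i : Fin d, (n * c ^ 2 * σ2) := Finset.sum_le_sum fun i _ => hEsq_i i
      _ = d * (n * c ^ 2 * σ2) := by
          rw [Finset.sum_const, Finset.card_univ, Fintype.card_fin, nsmul_eq_mul]
  -- ===== Step 5: Chebyshev and conclusion =====
  refine ⟨1, ?_⟩
  set K : ℝ := d * (B ^ 2 * σ2) with hK
  have hloglog : Tendsto (fun n : ℕ => Real.log (Real.log n)) atTop atTop :=
    Real.tendsto_log_atTop.comp (Real.tendsto_log_atTop.comp tendsto_natCast_atTop_atTop)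
  have hup : ∀ᶠ n : ℕ in atTop,
      P {ω | 1 * Real.sqrt (Real.log (Real.log n) / n) <
        ‖∑ j ∈ Finset.range n, ((Γ n)⁻¹.mulVec (pc j)) k • ξ j ω‖} ≤
      ENNReal.ofReal (K / Real.log (Real.log n)) := by
    filter_upwards [haB, hloglog.eventually_gt_atTop 0, eventually_ge_atTop 1]
      with n han hL hn1
    have hn0 : (0 : ℝ) < n := by exact_mod_cast Nat.pos_of_ne_zero (by omega)
    set L : ℝ := Real.log (Real.log n)
    set S : Ω → ℝ := fun ω => ‖∑ j ∈ Finset.range n, ((Γ n)⁻¹.mulVec (pc j)) k • ξ j ω‖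
      with hS
    set t : ℝ := Real.sqrt (L / n) with ht
    have htpos : 0 < t := Real.sqrt_pos.2 (div_pos hL hn0)
    have ht2 : t ^ 2 = L / n := Real.sq_sqrt (le_of_lt (div_pos hL hn0))
    obtain ⟨hint, hbound⟩ := moment n (B / n) (by positivity) han
    -- Markov's inequality
    have hmarkov := mul_meas_ge_le_integral_of_nonneg
      (μ := P) (f := fun ω => S ω ^ 2)
      (Filter.Eventually.of_forall fun ω => sq_nonneg _) hint (t ^ 2)
    have hsub : {ω | 1 * t < S ω} ⊆ {ω | t ^ 2 ≤ S ω ^ 2} := by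
      intro ω hω
      simp only [Set.mem_setOf_eq, one_mul] at hω ⊢
      exact pow_le_pow_left₀ htpos.le hω.le 2
    have hmono := measure_mono (μ := P) hsub
    have hfin : P {ω | t ^ 2 ≤ S ω ^ 2} ≠ ⊤ := measure_ne_top _ _
    have hEb : ∫ ω, S ω ^ 2 ∂P ≤ K / n := by
      refine hbound.trans (le_of_eq ?_)
      rw [hK]
      field_simp
    have htoReal : (P {ω | t ^ 2 ≤ S ω ^ 2}).toReal ≤ K / L := by
      have h1 : (P {ω | t ^ 2 ≤ S ω ^ 2}).toReal ≤ (∫ ω, S ω ^ 2 ∂P) / t ^ 2 := by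
        rw [le_div_iff₀ (by positivity)]
        rw [measureReal_def] at hmarkov
        linarith [hmarkov]
      refine h1.trans ?_
      rw [ht2]
      rw [div_div_eq_mul_div, div_le_div_iff₀ (by positivity) hL]
      calc (∫ ω, S ω ^ 2 ∂P) * n * L ≤ (K / n) * n * L := by
            have hEnonneg : (0:ℝ) ≤ L * n := by positivity
            nlinarith [hEb, hL.le, hn0.le]
        _ = K * (L / n * n) := by ring
        _ = K * L := by rw [div_mul_cancel₀ _ hn0.ne']
      -- done
    calc P {ω | 1 * t < S ω} ≤ P {ω | t ^ 2 ≤ S ω ^ 2} := hmono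
      _ = ENNReal.ofReal ((P {ω | t ^ 2 ≤ S ω ^ 2}).toReal) :=
          (ENNReal.ofReal_toReal hfin).symm
      _ ≤ ENNReal.ofReal (K / L) := ENNReal.ofReal_le_ofReal htoReal
  have hupperlim : Tendsto (fun n : ℕ => ENNReal.ofReal (K / Real.log (Real.log n)))
      atTop (𝓝 0) := by
    have h2 : Tendsto (fun n : ℕ => K / Real.log (Real.log n)) atTop (𝓝 0) :=
      Tendsto.div_atTop tendsto_const_nhds hloglog
    simpa using ENNReal.tendsto_ofReal h2
  exact tendsto_of_tendsto_of_tendsto_of_le_of_le' tendsto_const_nhds hupperlim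
    (Filter.Eventually.of_forall fun n => zero_le) hup
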